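/- In a graph G reduced so that every module strictly contained in a connected component is an independent set of size at most k+1 (and no component is a series composition or a cograph), if G can be made P_4-free by deleting a set F of at most k edges yielding cograph H with cotree T, then T has at most 2k affected leaves and at most 2k affected internal nodes, where a leaf is affected if its vertex is incident to an edge of F and an internal node is affected if it is the least common ancestor of two affected leaves. -/

import Mathlib

variable {V : Type*}

/-- `{a,b,c,d}` induces a path `a - b - c - d` on four vertices in `G`. -/
def IsInducedP4 (G : SimpleGraph V) (a b c d : V) : Prop :=
  a ≠ b ∧ a ≠ c ∧ a ≠ d ∧ b ≠ c ∧ b ≠ d ∧ c ≠ d ∧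
  G.Adj a b ∧ G.Adj b c ∧ G.Adj c d ∧ ¬ G.Adj a c ∧ ¬ G.Adj a d ∧ ¬ G.Adj b d

/-- `G` has no induced path on four vertices. -/
def P4Free (G : SimpleGraph V) : Prop := ∀ a b c d : V, ¬ IsInducedP4 G a b c d

/-- `M` is a module of `G`: every vertex outside `M` is adjacent to all or none of `M`. -/
def IsModule (G : SimpleGraph V) (M : Set V) : Prop :=
  ∀ x ∉ M, (∀ v ∈ M, G.Adj x v) ∨ (∀ v ∈ M, ¬ G.Adj x v)

/-- `F` is an edge-deletion set of `G`: a set of edges whose removal makes `G` `P₄`-free. -/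
def IsDelSet (G : SimpleGraph V) (F : Set (Sym2 V)) : Prop :=
  F ⊆ G.edgeSet ∧ P4Free (G.deleteEdges F)

/-- `F` is an optimal (minimum-cardinality) edge-deletion set of `G`. -/
def IsOptDelSet (G : SimpleGraph V) (F : Set (Sym2 V)) : Prop :=
  IsDelSet G F ∧ ∀ F' : Set (Sym2 V), IsDelSet G F' → F.ncard ≤ F'.ncard
/-- A (binary) cotree over vertex type `V`: leaves are vertices, internal nodes are
series or parallel compositions. -/
inductive Cotree (V : Type) : Type
  | leaf : V → Cotree V
  | series : Cotree V → Cotree V → Cotree V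
  | parallel : Cotree V → Cotree V → Cotree V

namespace Cotree

/-- The vertex `v` is a leaf (descendant) of the cotree `t`. -/
def memLeaf {V : Type} (v : V) : Cotree V → Prop
  | leaf w => v = w
  | series a b => memLeaf v a ∨ memLeaf v b
  | parallel a b => memLeaf v a ∨ memLeaf v b

/-- Adjacency in the cograph represented by a cotree: two vertices are adjacent iff
their least common ancestor is a series node. -/
def adj {V : Type} (x y : V) : Cotree V → Prop
  | leaf _ => False
  | series a b => adj x y a ∨ adj x y b ∨ (memLeaf x a ∧ memLeaf y b) ∨ (memLeaf x b ∧ memLeaf y a)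
  | parallel a b => adj x y a ∨ adj x y b

/-- The list of leaves of a cotree. -/
def leavesList {V : Type} : Cotree V → List V
  | leaf w => [w]
  | series a b => leavesList a ++ leavesList b
  | parallel a b => leavesList a ++ leavesList b

/-- `s` is a subtree (node) of `t`. -/
def Subtree {V : Type} (s : Cotree V) : Cotree V → Prop
  | leaf w => s = leaf w
  | series a b => s = series a b ∨ Subtree s a ∨ Subtree s b
  | parallel a b => s = parallel a b ∨ Subtree s a ∨ Subtree s b

/-- The node `n` is the least common ancestor of the leaves `x` and `y`:
`x` and `y` lie in different children of `n`. -/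
def IsLcaAt {V : Type} (x y : V) : Cotree V → Prop
  | leaf _ => False
  | series a b => (memLeaf x a ∧ memLeaf y b) ∨ (memLeaf x b ∧ memLeaf y a)
  | parallel a b => (memLeaf x a ∧ memLeaf y b) ∨ (memLeaf x b ∧ memLeaf y a)

end Cotree


section Aux

open Cotree

lemma memLeaf_iff_mem {V : Type} (v : V) : ∀ t : Cotree V, memLeaf v t ↔ v ∈ leavesList t := by
  intro t
  induction t with
  | leaf w => simp [memLeaf, leavesList]
  | series a b iha ihb => simp [memLeaf, leavesList, iha, ihb]
  | parallel a b iha ihb => simp [memLeaf, leavesList, iha, ihb]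

lemma finite_subtree {V : Type} (t : Cotree V) : {n : Cotree V | Subtree n t}.Finite := by
  induction t with
  | leaf w =>
      have : {n : Cotree V | Subtree n (Cotree.leaf w)} = {Cotree.leaf w} := by
        ext n; simp [Subtree]
      rw [this]; exact Set.finite_singleton _
  | series a b iha ihb =>
      have : {n : Cotree V | Subtree n (Cotree.series a b)} =
          insert (Cotree.series a b) ({n | Subtree n a} ∪ {n | Subtree n b}) := by
        ext n; simp [Subtree]
      rw [this]; exact (iha.union ihb).insert _
  | parallel a b iha ihb =>
      have : {n : Cotree V | Subtree n (Cotree.parallel a b)} =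
          insert (Cotree.parallel a b) ({n | Subtree n a} ∪ {n | Subtree n b}) := by
        ext n; simp [Subtree]
      rw [this]; exact (iha.union ihb).insert _

lemma lca_bound {V : Type} [Finite V] (S : Set V) :
    ∀ t : Cotree V, (leavesList t).Nodup →
    ({n : Cotree V | Subtree n t ∧ ∃ x y : V, x ≠ y ∧ x ∈ S ∧ y ∈ S ∧ IsLcaAt x y n}.ncard + 1
      ≤ {v : V | v ∈ S ∧ memLeaf v t}.ncard)
    ∨ {n : Cotree V | Subtree n t ∧ ∃ x y : V, x ≠ y ∧ x ∈ S ∧ y ∈ S ∧ IsLcaAt x y n} = ∅ := by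
  intro t
  induction t with
  | leaf w =>
      intro _
      right
      ext n
      simp only [Set.mem_setOf_eq, Set.mem_empty_iff_false, iff_false, not_and]
      rintro rfl ⟨x, y, -, -, -, h⟩
      exact h
  | series a b iha ihb =>
      intro hnd
      rw [leavesList] at hnd
      have hna := hnd.of_append_left
      have hnb := hnd.of_append_right
      have hdl : (leavesList a).Disjoint (leavesList b) := List.disjoint_of_nodup_append hnd
      set La := {n : Cotree V | Subtree n a ∧ ∃ x y : V, x ≠ y ∧ x ∈ S ∧ y ∈ S ∧ IsLcaAt x y n} with hLa
      set Lb := {n : Cotree V | Subtree n b ∧ ∃ x y : V, x ≠ y ∧ x ∈ S ∧ y ∈ S ∧ IsLcaAt x y n} with hLb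
      set Lt := {n : Cotree V | Subtree n (Cotree.series a b) ∧ ∃ x y : V, x ≠ y ∧ x ∈ S ∧ y ∈ S ∧ IsLcaAt x y n} with hLt
      have hfLa : La.Finite := (finite_subtree a).subset (fun n h => h.1)
      have hfLb : Lb.Finite := (finite_subtree b).subset (fun n h => h.1)
      have hsub : Lt ⊆ insert (Cotree.series a b) (La ∪ Lb) := by
        rintro n ⟨hs, hx⟩
        have hs' : n = Cotree.series a b ∨ Subtree n a ∨ Subtree n b := hs
        rcases hs' with rfl | hs' | hs'
        · exact Set.mem_insert _ _
        · exact Set.mem_insert_of_mem _ (Or.inl ⟨hs', hx⟩)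
        · exact Set.mem_insert_of_mem _ (Or.inr ⟨hs', hx⟩)
      have hmt : {v : V | v ∈ S ∧ memLeaf v (Cotree.series a b)} =
          {v : V | v ∈ S ∧ memLeaf v a} ∪ {v : V | v ∈ S ∧ memLeaf v b} := by
        ext v; simp [memLeaf]
      have hdisj : Disjoint {v : V | v ∈ S ∧ memLeaf v a} {v : V | v ∈ S ∧ memLeaf v b} := by
        rw [Set.disjoint_left]
        rintro v ⟨hvS, hva⟩ ⟨-, hvb⟩
        exact hdl ((memLeaf_iff_mem v a).1 hva) ((memLeaf_iff_mem v b).1 hvb)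
      have hm : {v : V | v ∈ S ∧ memLeaf v (Cotree.series a b)}.ncard =
          {v : V | v ∈ S ∧ memLeaf v a}.ncard + {v : V | v ∈ S ∧ memLeaf v b}.ncard := by
        rw [hmt, Set.ncard_union_eq hdisj]
      have e1 : Lt.ncard ≤ (La ∪ Lb).ncard + 1 := by
        calc Lt.ncard ≤ (insert (Cotree.series a b) (La ∪ Lb)).ncard :=
              Set.ncard_le_ncard hsub ((hfLa.union hfLb).insert _)
          _ ≤ (La ∪ Lb).ncard + 1 := Set.ncard_insert_le _ _
      have e3 : (La ∪ Lb).ncard ≤ La.ncard + Lb.ncard := Set.ncard_union_le _ _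
      by_cases hroot : (Cotree.series a b) ∈ Lt
      · obtain ⟨-, x, y, hxy, hxS, hyS, hlca⟩ := hroot
        have hlca' : (memLeaf x a ∧ memLeaf y b) ∨ (memLeaf x b ∧ memLeaf y a) := hlca
        have hma : 1 ≤ {v : V | v ∈ S ∧ memLeaf v a}.ncard ∧
            1 ≤ {v : V | v ∈ S ∧ memLeaf v b}.ncard := by
          rcases hlca' with ⟨h1, h2⟩ | ⟨h1, h2⟩
          · exact ⟨(Set.ncard_pos (Set.toFinite _)).2 ⟨x, hxS, h1⟩, (Set.ncard_pos (Set.toFinite _)).2 ⟨y, hyS, h2⟩⟩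
          · exact ⟨(Set.ncard_pos (Set.toFinite _)).2 ⟨y, hyS, h2⟩, (Set.ncard_pos (Set.toFinite _)).2 ⟨x, hxS, h1⟩⟩
        left
        have ha' : La.ncard + 1 ≤ {v : V | v ∈ S ∧ memLeaf v a}.ncard ∨ La.ncard = 0 := by
          rcases iha hna with h | h
          · exact Or.inl h
          · right; rw [h]; exact Set.ncard_empty _
        have hb' : Lb.ncard + 1 ≤ {v : V | v ∈ S ∧ memLeaf v b}.ncard ∨ Lb.ncard = 0 := by
          rcases ihb hnb with h | h
          · exact Or.inl h
          · right; rw [h]; exact Set.ncard_empty _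
        rcases ha' with ha' | ha' <;> rcases hb' with hb' | hb' <;> omega
      · have hsub2 : Lt ⊆ La ∪ Lb := by
          intro n hn
          rcases Set.mem_insert_iff.1 (hsub hn) with h | h
          · exact absurd (h ▸ hn) hroot
          · exact h
        rcases iha hna with ha' | ha' <;> rcases ihb hnb with hb' | hb'
        · left
          have : Lt.ncard ≤ (La ∪ Lb).ncard := Set.ncard_le_ncard hsub2 (hfLa.union hfLb)
          omega
        · left
          have : Lt.ncard ≤ (La ∪ Lb).ncard := Set.ncard_le_ncard hsub2 (hfLa.union hfLb)
          have hb0 : Lb.ncard = 0 := by rw [hb']; exact Set.ncard_empty _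
          omega
        · left
          have : Lt.ncard ≤ (La ∪ Lb).ncard := Set.ncard_le_ncard hsub2 (hfLa.union hfLb)
          have ha0 : La.ncard = 0 := by rw [ha']; exact Set.ncard_empty _
          omega
        · right
          rw [← Set.subset_empty_iff]
          intro n hn
          rcases hsub2 hn with h | h
          · rw [ha'] at h; exact h
          · rw [hb'] at h; exact h
  | parallel a b iha ihb =>
      intro hnd
      rw [leavesList] at hnd
      have hna := hnd.of_append_left
      have hnb := hnd.of_append_right
      have hdl : (leavesList a).Disjoint (leavesList b) := List.disjoint_of_nodup_append hnd
      set La := {n : Cotree V | Subtree n a ∧ ∃ x y : V, x ≠ y ∧ x ∈ S ∧ y ∈ S ∧ IsLcaAt x y n} with hLa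
      set Lb := {n : Cotree V | Subtree n b ∧ ∃ x y : V, x ≠ y ∧ x ∈ S ∧ y ∈ S ∧ IsLcaAt x y n} with hLb
      set Lt := {n : Cotree V | Subtree n (Cotree.parallel a b) ∧ ∃ x y : V, x ≠ y ∧ x ∈ S ∧ y ∈ S ∧ IsLcaAt x y n} with hLt
      have hfLa : La.Finite := (finite_subtree a).subset (fun n h => h.1)
      have hfLb : Lb.Finite := (finite_subtree b).subset (fun n h => h.1)
      have hsub : Lt ⊆ insert (Cotree.parallel a b) (La ∪ Lb) := by
        rintro n ⟨hs, hx⟩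
        have hs' : n = Cotree.parallel a b ∨ Subtree n a ∨ Subtree n b := hs
        rcases hs' with rfl | hs' | hs'
        · exact Set.mem_insert _ _
        · exact Set.mem_insert_of_mem _ (Or.inl ⟨hs', hx⟩)
        · exact Set.mem_insert_of_mem _ (Or.inr ⟨hs', hx⟩)
      have hmt : {v : V | v ∈ S ∧ memLeaf v (Cotree.parallel a b)} =
          {v : V | v ∈ S ∧ memLeaf v a} ∪ {v : V | v ∈ S ∧ memLeaf v b} := by
        ext v; simp [memLeaf]
      have hdisj : Disjoint {v : V | v ∈ S ∧ memLeaf v a} {v : V | v ∈ S ∧ memLeaf v b} := by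
        rw [Set.disjoint_left]
        rintro v ⟨hvS, hva⟩ ⟨-, hvb⟩
        exact hdl ((memLeaf_iff_mem v a).1 hva) ((memLeaf_iff_mem v b).1 hvb)
      have hm : {v : V | v ∈ S ∧ memLeaf v (Cotree.parallel a b)}.ncard =
          {v : V | v ∈ S ∧ memLeaf v a}.ncard + {v : V | v ∈ S ∧ memLeaf v b}.ncard := by
        rw [hmt, Set.ncard_union_eq hdisj]
      have e1 : Lt.ncard ≤ (La ∪ Lb).ncard + 1 := by
        calc Lt.ncard ≤ (insert (Cotree.parallel a b) (La ∪ Lb)).ncard :=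
              Set.ncard_le_ncard hsub ((hfLa.union hfLb).insert _)
          _ ≤ (La ∪ Lb).ncard + 1 := Set.ncard_insert_le _ _
      have e3 : (La ∪ Lb).ncard ≤ La.ncard + Lb.ncard := Set.ncard_union_le _ _
      by_cases hroot : (Cotree.parallel a b) ∈ Lt
      · obtain ⟨-, x, y, hxy, hxS, hyS, hlca⟩ := hroot
        have hlca' : (memLeaf x a ∧ memLeaf y b) ∨ (memLeaf x b ∧ memLeaf y a) := hlca
        have hma : 1 ≤ {v : V | v ∈ S ∧ memLeaf v a}.ncard ∧
            1 ≤ {v : V | v ∈ S ∧ memLeaf v b}.ncard := by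
          rcases hlca' with ⟨h1, h2⟩ | ⟨h1, h2⟩
          · exact ⟨(Set.ncard_pos (Set.toFinite _)).2 ⟨x, hxS, h1⟩, (Set.ncard_pos (Set.toFinite _)).2 ⟨y, hyS, h2⟩⟩
          · exact ⟨(Set.ncard_pos (Set.toFinite _)).2 ⟨y, hyS, h2⟩, (Set.ncard_pos (Set.toFinite _)).2 ⟨x, hxS, h1⟩⟩
        left
        have ha' : La.ncard + 1 ≤ {v : V | v ∈ S ∧ memLeaf v a}.ncard ∨ La.ncard = 0 := by
          rcases iha hna with h | h
          · exact Or.inl h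
          · right; rw [h]; exact Set.ncard_empty _
        have hb' : Lb.ncard + 1 ≤ {v : V | v ∈ S ∧ memLeaf v b}.ncard ∨ Lb.ncard = 0 := by
          rcases ihb hnb with h | h
          · exact Or.inl h
          · right; rw [h]; exact Set.ncard_empty _
        rcases ha' with ha' | ha' <;> rcases hb' with hb' | hb' <;> omega
      · have hsub2 : Lt ⊆ La ∪ Lb := by
          intro n hn
          rcases Set.mem_insert_iff.1 (hsub hn) with h | h
          · exact absurd (h ▸ hn) hroot
          · exact h
        rcases iha hna with ha' | ha' <;> rcases ihb hnb with hb' | hb'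
        · left
          have : Lt.ncard ≤ (La ∪ Lb).ncard := Set.ncard_le_ncard hsub2 (hfLa.union hfLb)
          omega
        · left
          have : Lt.ncard ≤ (La ∪ Lb).ncard := Set.ncard_le_ncard hsub2 (hfLa.union hfLb)
          have hb0 : Lb.ncard = 0 := by rw [hb']; exact Set.ncard_empty _
          omega
        · left
          have : Lt.ncard ≤ (La ∪ Lb).ncard := Set.ncard_le_ncard hsub2 (hfLa.union hfLb)
          have ha0 : La.ncard = 0 := by rw [ha']; exact Set.ncard_empty _
          omega
        · right
          rw [← Set.subset_empty_iff]
          intro n hn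
          rcases hsub2 hn with h | h
          · rw [ha'] at h; exact h
          · rw [hb'] at h; exact h

lemma incidence_bound {V : Type} [Finite V] (F : Set (Sym2 V)) :
    {x : V | ∃ e ∈ F, x ∈ e}.ncard ≤ 2 * F.ncard := by
  have hfin : F.Finite := Set.toFinite F
  refine Set.Finite.induction_on (motive := fun F _ => {x : V | ∃ e ∈ F, x ∈ e}.ncard ≤ 2 * F.ncard) F hfin (by simp) ?_
  rintro f F hf hfin ih
  · 
      have hset : {x : V | ∃ e ∈ insert f F, x ∈ e} =
          {x : V | x ∈ f} ∪ {x : V | ∃ e ∈ F, x ∈ e} := by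
        ext x; simp [or_and_right, exists_or]
      have hf2 : {x : V | x ∈ f}.ncard ≤ 2 := by
        induction f using Sym2.ind with
        | _ u w =>
            have : {x : V | x ∈ s(u, w)} = {u, w} := by
              ext x; simp [Sym2.mem_iff]
            rw [this]
            exact (Set.ncard_insert_le _ _).trans (by simp)
      have h1 : {x : V | ∃ e ∈ insert f F, x ∈ e}.ncard ≤
          {x : V | x ∈ f}.ncard + {x : V | ∃ e ∈ F, x ∈ e}.ncard := by
        rw [hset]; exact Set.ncard_union_le _ _
      have h2 : (insert f F).ncard = F.ncard + 1 := Set.ncard_insert_of_notMem hf hfin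
      omega

end Aux

/-- Suppose `G` is reduced: every module of `G` strictly contained in a
connected component is an independent set of size at most `k+1`, no connected component
of `G` is a series composition of two nonempty graphs, and no connected component of
`G` is a cograph. If deleting a set `F` of at most `k` edges from `G` yields a `P₄`-free
graph (a cograph) represented by the cotree `T`, then `T` has at most `2k` affected
leaves (vertices incident to an edge of `F`) and at most `2k` affected internal nodes
(least common ancestors of two distinct affected leaves). -/

theorem stmt16 {V : Type} [Finite V] (G : SimpleGraph V) (k : ℕ)
    (hmod : ∀ M : Set V, IsModule G M → (∃ z ∉ M, ∃ w ∈ M, G.Reachable w z) →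
      (∀ x ∈ M, ∀ y ∈ M, ¬ G.Adj x y) ∧ M.ncard ≤ k + 1)
    (hnoseries : ∀ A B : Set V, A.Nonempty → B.Nonempty → Disjoint A B →
      (∀ x ∈ A ∪ B, ∀ y ∉ A ∪ B, ¬ G.Adj x y) → ¬ (∀ a ∈ A, ∀ b ∈ B, G.Adj a b))
    (hnocographcomp : ∀ v : V, ¬ P4Free (G.induce {u : V | G.Reachable v u}))
    (F : Set (Sym2 V)) (hF : F ⊆ G.edgeSet) (hk : F.ncard ≤ k)
    (hfree : P4Free (G.deleteEdges F))
    (T : Cotree V)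
    (hrep : ∀ x y : V, (G.deleteEdges F).Adj x y ↔ Cotree.adj x y T)
    (hnodup : (Cotree.leavesList T).Nodup)
    (hall : ∀ v : V, Cotree.memLeaf v T) :
    {x : V | ∃ e ∈ F, x ∈ e}.ncard ≤ 2 * k ∧
    {n : Cotree V | Cotree.Subtree n T ∧ ∃ x y : V, x ≠ y ∧
      (∃ e ∈ F, x ∈ e) ∧ (∃ e ∈ F, y ∈ e) ∧ Cotree.IsLcaAt x y n}.ncard ≤ 2 * k := by
  have hS : {x : V | ∃ e ∈ F, x ∈ e}.ncard ≤ 2 * k := by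
    calc {x : V | ∃ e ∈ F, x ∈ e}.ncard ≤ 2 * F.ncard := incidence_bound F
      _ ≤ 2 * k := by omega
  refine ⟨hS, ?_⟩
  have hmem : {v : V | v ∈ {x : V | ∃ e ∈ F, x ∈ e} ∧ Cotree.memLeaf v T} =
      {x : V | ∃ e ∈ F, x ∈ e} := by
    ext v; simp only [Set.mem_setOf_eq, and_iff_left_iff_imp]
    intro _; exact hall v
  show {n : Cotree V | Cotree.Subtree n T ∧ ∃ x y : V, x ≠ y ∧
      x ∈ {x : V | ∃ e ∈ F, x ∈ e} ∧ y ∈ {x : V | ∃ e ∈ F, x ∈ e} ∧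
      Cotree.IsLcaAt x y n}.ncard ≤ 2 * k
  rcases lca_bound {x : V | ∃ e ∈ F, x ∈ e} T hnodup with h | h
  · rw [hmem] at h
    omega
  · rw [h]
    simp
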